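/- If s_1, ..., s_{n+1} are exchangeable real-valued random variables such that ties among them occur with probability zero, then for any p in (0,1), P(s_{n+1} ≤ Q(p, s_{1:n} ∪ {∞})) ≤ p + 1/(n+1), where Q is the empirical quantile function. -/

import Mathlib

open MeasureTheory ProbabilityTheory

/-- Empirical `p`-quantile of the multiset `{s 0, ..., s (n-1)} ∪ {∞}` (of size `n+1`). -/
noncomputable def empQuantile (n : ℕ) (s : Fin n → ℝ) (p : ℝ) : ℝ :=
  sInf {t : ℝ | p ≤ ((Finset.univ.filter (fun i => s i ≤ t)).card : ℝ) / (n + 1)}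

open Finset
open scoped ENNReal

private lemma rank_lt_rank {m : ℕ} (v : Fin m → ℝ) {j j' : Fin m} (h : v j < v j') :
    (univ.filter (fun i => v i ≤ v j)).card < (univ.filter (fun i => v i ≤ v j')).card := by
  apply Finset.card_lt_card
  constructor
  · intro i hi
    simp only [mem_filter, mem_univ, true_and] at hi ⊢
    exact hi.trans h.le
  · intro hsub
    have hj' : j' ∈ univ.filter (fun i => v i ≤ v j') := by simp
    have := hsub hj'
    simp only [mem_filter, mem_univ, true_and] at this
    exact absurd this (not_le.mpr h)

private lemma rank_count_le {m k : ℕ} (v : Fin m → ℝ) (hv : Function.Injective v) :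
    (univ.filter (fun j => (univ.filter (fun i => v i ≤ v j)).card ≤ k)).card ≤ k := by
  classical
  set r : Fin m → ℕ := fun j => (univ.filter (fun i => v i ≤ v j)).card with hr
  have hinj : Function.Injective r := by
    intro j j' h
    by_contra hne
    have hvne : v j ≠ v j' := fun he => hne (hv he)
    rcases lt_or_gt_of_ne hvne with hlt | hlt
    · exact absurd h (Nat.ne_of_lt (rank_lt_rank v hlt))
    · exact absurd h.symm (Nat.ne_of_lt (rank_lt_rank v hlt))
  have hmaps : ∀ j ∈ univ.filter (fun j => r j ≤ k), r j ∈ Finset.Icc 1 k := by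
    intro j hj
    simp only [mem_filter, mem_univ, true_and] at hj
    have h1 : 1 ≤ r j := Finset.card_pos.mpr ⟨j, by simp⟩
    exact Finset.mem_Icc.mpr ⟨h1, hj⟩
  have := Finset.card_le_card_of_injOn r hmaps (hinj.injOn)
  simpa [Nat.card_Icc] using this

private lemma det_lemma (n : ℕ) (v : Fin (n + 1) → ℝ) (hv : Function.Injective v)
    (p : ℝ) (hp0 : 0 < p) (k : ℕ) (hk1 : 1 ≤ k) (hkn : k ≤ n)
    (hpk : p * ((n : ℝ) + 1) ≤ k)
    (h : v (Fin.last n) ≤ empQuantile n (fun i => v i.castSucc) p) :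
    (univ.filter (fun i => v i ≤ v (Fin.last n))).card ≤ k := by
  classical
  have hn1 : (0 : ℝ) < (n : ℝ) + 1 := by positivity
  by_contra hcard
  push_neg at hcard
  set A : Finset (Fin (n + 1)) := univ.filter (fun i => v i < v (Fin.last n)) with hA
  have hAcard : k ≤ A.card := by
    have hsub : (univ.filter (fun i => v i ≤ v (Fin.last n))).erase (Fin.last n) ⊆ A := by
      intro i hi
      rw [Finset.mem_erase] at hi
      obtain ⟨hne, hle⟩ := hi
      rw [mem_filter] at hle ⊢
      exact ⟨mem_univ i, lt_of_le_of_ne hle.2 (fun he => hne (hv he))⟩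
    have hmem : Fin.last n ∈ univ.filter (fun i => v i ≤ v (Fin.last n)) := by simp
    have h1 := Finset.card_erase_of_mem hmem
    have h2 := Finset.card_le_card hsub
    omega
  have hAne : A.Nonempty := Finset.card_pos.mp (by omega)
  have hAine : (A.image v).Nonempty := hAne.image v
  set t : ℝ := (A.image v).max' hAine with ht
  obtain ⟨i0, hi0A, hi0⟩ := Finset.mem_image.mp ((A.image v).max'_mem hAine)
  have htlt : t < v (Fin.last n) := by
    rw [ht, ← hi0]
    exact (mem_filter.mp hi0A).2
  have htub : ∀ i ∈ A, v i ≤ t := fun i hi =>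
    Finset.le_max' _ _ (Finset.mem_image_of_mem v hi)
  have hcount : k ≤ (univ.filter (fun i : Fin n => v i.castSucc ≤ t)).card := by
    refine hAcard.trans (Finset.card_le_card_of_surjOn Fin.castSucc ?_)
    intro i hiA
    simp only [hA, Finset.mem_coe, mem_filter, mem_univ, true_and] at hiA
    have hine : i ≠ Fin.last n := by
      intro he
      rw [he] at hiA
      exact lt_irrefl _ hiA
    obtain ⟨j, hj⟩ := Fin.exists_castSucc_eq.mpr hine
    refine ⟨j, ?_, hj⟩
    simp only [Finset.mem_coe, mem_filter, mem_univ, true_and, hj]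
    exact htub i (by simp [hA, hiA])
  have hmem : t ∈ {x : ℝ | p ≤ ((univ.filter (fun i : Fin n => v i.castSucc ≤ x)).card : ℝ) / ((n : ℝ) + 1)} := by
    simp only [Set.mem_setOf_eq]
    rw [le_div_iff₀ hn1]
    calc p * ((n : ℝ) + 1) ≤ (k : ℝ) := hpk
      _ ≤ _ := by exact_mod_cast hcount
  have hnpos : 0 < n := by omega
  have hFinn : Nonempty (Fin n) := ⟨⟨0, hnpos⟩⟩
  have huniv : (Finset.univ : Finset (Fin n)).Nonempty := Finset.univ_nonempty
  have himg : ((Finset.univ : Finset (Fin n)).image (fun i => v i.castSucc)).Nonempty :=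
    huniv.image _
  have hbdd : BddBelow {x : ℝ | p ≤ ((univ.filter (fun i : Fin n => v i.castSucc ≤ x)).card : ℝ) / ((n : ℝ) + 1)} := by
    refine ⟨((Finset.univ : Finset (Fin n)).image (fun i => v i.castSucc)).min' himg, ?_⟩
    intro x hx
    simp only [Set.mem_setOf_eq] at hx
    have hpos : 0 < (univ.filter (fun i : Fin n => v i.castSucc ≤ x)).card := by
      rcases Nat.eq_zero_or_pos (univ.filter (fun i : Fin n => v i.castSucc ≤ x)).card with h0 | hpos
      · rw [h0] at hx
        norm_num at hx
        linarith
      · exact hpos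
    obtain ⟨i, hi⟩ := Finset.card_pos.mp hpos
    simp only [mem_filter, mem_univ, true_and] at hi
    exact le_trans (Finset.min'_le _ _ (Finset.mem_image_of_mem _ (mem_univ i))) hi
  have hQle : empQuantile n (fun i => v i.castSucc) p ≤ t := csInf_le hbdd hmem
  linarith

/-- If `s 0, ..., s n` are exchangeable real random variables and ties occur with
probability zero, then for any `p ∈ (0,1)`,
`P(s n ≤ Q(p, {s 0,…,s (n-1)} ∪ {∞})) ≤ p + 1/(n+1)`. -/
theorem conformal_quantile_lemma_upper
    {Ω : Type*} [MeasurableSpace Ω] (μ : Measure Ω) [IsProbabilityMeasure μ]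
    (n : ℕ) (s : Ω → Fin (n + 1) → ℝ) (hs : Measurable s)
    (hexch : ∀ π : Equiv.Perm (Fin (n + 1)),
      Measure.map (fun ω => s ω ∘ π) μ = Measure.map s μ)
    (hties : ∀ i j : Fin (n + 1), i ≠ j → μ {ω | s ω i = s ω j} = 0)
    (p : ℝ) (hp : p ∈ Set.Ioo (0 : ℝ) 1) :
    μ {ω | s ω (Fin.last n) ≤ empQuantile n (fun i => s ω i.castSucc) p} ≤
      ENNReal.ofReal (p + 1 / (n + 1)) := by
  classical
  obtain ⟨hp0, hp1⟩ := hp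
  have hn1 : (0 : ℝ) < (n : ℝ) + 1 := by positivity
  by_cases htriv : 1 ≤ p + 1 / ((n : ℝ) + 1)
  · calc μ _ ≤ 1 := prob_le_one
      _ ≤ ENNReal.ofReal (p + 1 / ((n : ℝ) + 1)) := ENNReal.one_le_ofReal.mpr htriv
  push_neg at htriv
  set k : ℕ := ⌈p * ((n : ℝ) + 1)⌉₊ with hk
  have hk1 : 1 ≤ k := Nat.one_le_ceil_iff.mpr (by positivity)
  have hkn : k ≤ n := by
    rw [hk, Nat.ceil_le]
    have h2 : (p + 1 / ((n : ℝ) + 1)) * ((n : ℝ) + 1) < 1 * ((n : ℝ) + 1) :=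
      mul_lt_mul_of_pos_right htriv hn1
    have h3 : 1 / ((n : ℝ) + 1) * ((n : ℝ) + 1) = 1 := by field_simp
    nlinarith
  have hpk : p * ((n : ℝ) + 1) ≤ (k : ℝ) := Nat.le_ceil _
  have hkle : (k : ℝ) ≤ p * ((n : ℝ) + 1) + 1 :=
    (Nat.ceil_lt_add_one (by positivity)).le
  -- the null set of ties
  set N : Set Ω := ⋃ (i : Fin (n + 1)) (j : Fin (n + 1)) (_ : i ≠ j), {ω | s ω i = s ω j}
    with hN
  have hNnull : μ N = 0 := by
    rw [hN]
    exact measure_iUnion_null fun i => measure_iUnion_null fun j =>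
      measure_iUnion_null fun hij => hties i j hij
  have hNm : MeasurableSet N := by
    rw [hN]
    refine MeasurableSet.iUnion fun i => MeasurableSet.iUnion fun j =>
      MeasurableSet.iUnion fun _ => ?_
    exact measurableSet_eq_fun ((measurable_pi_apply i).comp hs)
      ((measurable_pi_apply j).comp hs)
  have hinj : ∀ ω, ω ∉ N → Function.Injective (s ω) := by
    intro ω hω i j hij
    by_contra hne
    exact hω (Set.mem_iUnion.mpr ⟨i, Set.mem_iUnion.mpr ⟨j, Set.mem_iUnion.mpr ⟨hne, hij⟩⟩⟩)
  -- the rank events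
  set B : Fin (n + 1) → Set (Fin (n + 1) → ℝ) :=
    fun j => {v | (Finset.univ.filter (fun i => v i ≤ v j)).card ≤ k} with hB
  have hBm : ∀ j, MeasurableSet (B j) := by
    intro j
    have hm : Measurable fun v : Fin (n + 1) → ℝ =>
        (Finset.univ.filter (fun i => v i ≤ v j)).card := by
      simp only [Finset.card_filter]
      exact Finset.measurable_sum _ fun i _ =>
        Measurable.ite (measurableSet_le (measurable_pi_apply i) (measurable_pi_apply j))
          measurable_const measurable_const
    exact hm (measurableSet_Iic (a := k))
  have hsm' : ∀ π : Equiv.Perm (Fin (n + 1)), Measurable fun ω => s ω ∘ π :=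
    fun π => measurable_pi_iff.mpr fun i => (measurable_pi_apply (π i)).comp hs
  -- exchangeability: all rank events have the same probability
  have hEeq : ∀ j, μ (s ⁻¹' B j) = μ (s ⁻¹' B (Fin.last n)) := by
    intro j
    set π : Equiv.Perm (Fin (n + 1)) := Equiv.swap j (Fin.last n) with hπ
    have hπlast : π (Fin.last n) = j := Equiv.swap_apply_right j (Fin.last n)
    have hpre : (fun v : Fin (n + 1) → ℝ => v ∘ π) ⁻¹' B (Fin.last n) = B j := by
      ext v
      simp only [hB, Set.mem_preimage, Set.mem_setOf_eq, Function.comp, hπlast]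
      have hcardeq : (univ.filter (fun i => v (π i) ≤ v j)).card
          = (univ.filter (fun i => v i ≤ v j)).card := by
        apply Finset.card_bij (fun i _ => π i)
        · intro a ha
          simp only [mem_filter, mem_univ, true_and] at ha ⊢
          exact ha
        · intro a _ b _ hab
          exact π.injective hab
        · intro b hb
          refine ⟨π.symm b, ?_, Equiv.apply_symm_apply π b⟩
          simp only [mem_filter, mem_univ, true_and] at hb ⊢
          rwa [Equiv.apply_symm_apply]
      rw [hcardeq]
    calc μ (s ⁻¹' B j) = μ ((fun ω => s ω ∘ π) ⁻¹' B (Fin.last n)) := by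
          rw [← hpre]; rfl
      _ = Measure.map (fun ω => s ω ∘ π) μ (B (Fin.last n)) :=
          (Measure.map_apply (hsm' π) (hBm _)).symm
      _ = Measure.map s μ (B (Fin.last n)) := by rw [hexch π]
      _ = μ (s ⁻¹' B (Fin.last n)) := Measure.map_apply hs (hBm _)
  have hmeasEN : ∀ j : Fin (n + 1), MeasurableSet (s ⁻¹' B j ∩ Nᶜ) :=
    fun j => (hs (hBm j)).inter hNm.compl
  have hEN : ∀ j, μ (s ⁻¹' B j ∩ Nᶜ) = μ (s ⁻¹' B j) := by
    intro j
    refine le_antisymm (measure_mono Set.inter_subset_left) ?_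
    calc μ (s ⁻¹' B j) ≤ μ ((s ⁻¹' B j ∩ Nᶜ) ∪ N) := by
          refine measure_mono ?_
          intro ω hω
          by_cases h : ω ∈ N
          · exact Or.inr h
          · exact Or.inl ⟨hω, h⟩
      _ ≤ μ (s ⁻¹' B j ∩ Nᶜ) + μ N := measure_union_le _ _
      _ = μ (s ⁻¹' B j ∩ Nᶜ) := by rw [hNnull, add_zero]
  -- the multiplicity bound: at most k ranks are ≤ k
  have hsum : ∑ j : Fin (n + 1), μ (s ⁻¹' B j ∩ Nᶜ) ≤ (k : ℝ≥0∞) := by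
    calc ∑ j : Fin (n + 1), μ (s ⁻¹' B j ∩ Nᶜ)
        = ∑ j : Fin (n + 1), ∫⁻ ω, (s ⁻¹' B j ∩ Nᶜ).indicator (fun _ => (1 : ℝ≥0∞)) ω ∂μ := by
          exact Finset.sum_congr rfl fun j _ => (lintegral_indicator_one (hmeasEN j)).symm
      _ = ∫⁻ ω, ∑ j : Fin (n + 1), (s ⁻¹' B j ∩ Nᶜ).indicator (fun _ => (1 : ℝ≥0∞)) ω ∂μ :=
          (lintegral_finset_sum _ fun j _ => measurable_one.indicator (hmeasEN j)).symm
      _ ≤ ∫⁻ _, (k : ℝ≥0∞) ∂μ := by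
          refine lintegral_mono fun ω => ?_
          by_cases hω : ω ∈ N
          · have hz : ∀ j : Fin (n + 1),
                (s ⁻¹' B j ∩ Nᶜ).indicator (fun _ => (1 : ℝ≥0∞)) ω = 0 :=
              fun j => Set.indicator_of_notMem (fun h => h.2 hω) _
            simp [hz]
          · have heq : ∀ j : Fin (n + 1),
                (s ⁻¹' B j ∩ Nᶜ).indicator (fun _ => (1 : ℝ≥0∞)) ω
                  = if (univ.filter (fun i => s ω i ≤ s ω j)).card ≤ k then 1 else 0 := by
              intro j
              rw [Set.indicator_apply]
              refine if_congr ?_ rfl rfl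
              constructor
              · intro h
                exact h.1
              · intro h
                exact ⟨h, hω⟩
            calc ∑ j : Fin (n + 1), (s ⁻¹' B j ∩ Nᶜ).indicator (fun _ => (1 : ℝ≥0∞)) ω
                = ∑ j : Fin (n + 1),
                    if (univ.filter (fun i => s ω i ≤ s ω j)).card ≤ k then (1 : ℝ≥0∞) else 0 :=
                  Finset.sum_congr rfl fun j _ => heq j
              _ = ((univ.filter (fun j : Fin (n + 1) =>
                    (univ.filter (fun i => s ω i ≤ s ω j)).card ≤ k)).card : ℝ≥0∞) := by
                  rw [Finset.sum_boole]
              _ ≤ (k : ℝ≥0∞) := by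
                  exact_mod_cast rank_count_le (s ω) (hinj ω hω)
      _ = (k : ℝ≥0∞) := by simp
  have hconst : ∀ j, μ (s ⁻¹' B j ∩ Nᶜ) = μ (s ⁻¹' B (Fin.last n)) :=
    fun j => (hEN j).trans (hEeq j)
  have hmain : ((n : ℝ≥0∞) + 1) * μ (s ⁻¹' B (Fin.last n)) ≤ (k : ℝ≥0∞) := by
    have hrw : ∑ j : Fin (n + 1), μ (s ⁻¹' B j ∩ Nᶜ)
        = ((n : ℝ≥0∞) + 1) * μ (s ⁻¹' B (Fin.last n)) := by
      rw [Finset.sum_congr rfl fun j _ => hconst j]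
      rw [Finset.sum_const, Finset.card_univ, Fintype.card_fin, nsmul_eq_mul]
      push_cast
      ring
    rw [← hrw]
    exact hsum
  have hM : {ω | s ω (Fin.last n) ≤ empQuantile n (fun i => s ω i.castSucc) p}
      ⊆ s ⁻¹' B (Fin.last n) ∪ N := by
    intro ω hω
    by_cases hωN : ω ∈ N
    · exact Or.inr hωN
    · left
      exact det_lemma n (s ω) (hinj ω hωN) p hp0 k hk1 hkn hpk hω
  calc μ {ω | s ω (Fin.last n) ≤ empQuantile n (fun i => s ω i.castSucc) p}
      ≤ μ (s ⁻¹' B (Fin.last n) ∪ N) := measure_mono hM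
    _ ≤ μ (s ⁻¹' B (Fin.last n)) + μ N := measure_union_le _ _
    _ = μ (s ⁻¹' B (Fin.last n)) := by rw [hNnull, add_zero]
    _ ≤ (k : ℝ≥0∞) / ((n : ℝ≥0∞) + 1) := by
        have hb0 : ((n : ℝ≥0∞) + 1) ≠ 0 := by simp
        rw [ENNReal.le_div_iff_mul_le (Or.inl hb0) (Or.inl (by finiteness))]
        rw [mul_comm]
        exact hmain
    _ ≤ ENNReal.ofReal (p + 1 / ((n : ℝ) + 1)) := by
        have h1 : (k : ℝ≥0∞) = ENNReal.ofReal (k : ℝ) := by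
          rw [ENNReal.ofReal_natCast]
        have h2 : ((n : ℝ≥0∞) + 1) = ENNReal.ofReal ((n : ℝ) + 1) := by
          rw [ENNReal.ofReal_add (by positivity) zero_le_one]
          simp [ENNReal.ofReal_natCast]
        rw [h1, h2, ← ENNReal.ofReal_div_of_pos hn1]
        refine ENNReal.ofReal_le_ofReal ?_
        rw [div_le_iff₀ hn1]
        have : (p + 1 / ((n : ℝ) + 1)) * ((n : ℝ) + 1) = p * ((n : ℝ) + 1) + 1 := by
          field_simp
        linarith
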